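/- In the pre-Lie algebra B_b with product e_i ∘ e_j = (i/(1 + b·j))e_{i+j} (b not the inverse of a nonzero integer), the rescaled basis ē_i = (1 + b·i)e_i satisfies ē_i ∘ ē_j = (i(1 + b·i)/(1 + b(i+j)))·ē_{i+j}, and the associated Lie bracket satisfies [ē_i, ē_j] = (i - j)ē_{i+j}, i.e., the associated Lie algebra is the Witt algebra. -/

import Mathlib

/-- The bilinear product on `E = ⊕_{i∈ℤ} ℂ e_i` determined on basis elements by
`e_i ∘ e_j = c i j • e_{i+j}`. -/
noncomputable def gradedProd (c : ℤ → ℤ → ℂ) (x y : ℤ →₀ ℂ) : ℤ →₀ ℂ :=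
  x.sum fun i xi => y.sum fun j yj => Finsupp.single (i + j) (xi * yj * c i j)

/-- The product of the pre-Lie algebra `B_b`: `e_i ∘ e_j = (i/(1 + b j)) e_{i+j}`. -/
noncomputable def mulB (b : ℂ) (x y : ℤ →₀ ℂ) : ℤ →₀ ℂ :=
  gradedProd (fun i j => (i : ℂ) / (1 + b * j)) x y

/-- The rescaled basis `ē_i = (1 + b i) e_i`. -/
noncomputable def ebar (b : ℂ) (i : ℤ) : ℤ →₀ ℂ := Finsupp.single i (1 + b * i)

lemma one_add_ne (b : ℂ) (hb : ∀ n : ℤ, n ≠ 0 → b ≠ (n : ℂ)⁻¹) (k : ℤ) :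
    1 + b * k ≠ 0 := by
  intro h
  rcases eq_or_ne k 0 with hk | hk
  · simp [hk] at h
  · apply hb (-k) (by simpa using hk)
    have h1 : ((-k : ℤ) : ℂ) * b = 1 := by push_cast; linear_combination -h
    exact eq_inv_of_mul_eq_one_left (by linear_combination h1)

lemma mulB_ebar (b : ℂ) (hb : ∀ n : ℤ, n ≠ 0 → b ≠ (n : ℂ)⁻¹) (i j : ℤ) :
    mulB b (ebar b i) (ebar b j)
      = Finsupp.single (i + j) ((i : ℂ) * (1 + b * i)) := by
  have hj := one_add_ne b hb j
  unfold mulB gradedProd ebar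
  rw [Finsupp.sum_single_index (by simp), Finsupp.sum_single_index (by simp)]
  congr 1
  field_simp

theorem Bb_bracket_witt (b : ℂ) (hb : ∀ n : ℤ, n ≠ 0 → b ≠ (n : ℂ)⁻¹) :
    (∀ i j : ℤ,
      mulB b (ebar b i) (ebar b j)
        = ((i : ℂ) * (1 + b * i) / (1 + b * (i + j))) • ebar b (i + j)) ∧
    (∀ i j : ℤ,
      mulB b (ebar b i) (ebar b j) - mulB b (ebar b j) (ebar b i)
        = ((i : ℂ) - j) • ebar b (i + j)) := by
  constructor
  · intro i j
    rw [mulB_ebar b hb i j]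
    have hij := one_add_ne b hb (i + j)
    unfold ebar
    rw [Finsupp.smul_single]
    congr 1
    rw [smul_eq_mul]
    push_cast at hij ⊢
    field_simp
  · intro i j
    rw [mulB_ebar b hb i j, mulB_ebar b hb j i, add_comm j i]
    unfold ebar
    rw [Finsupp.smul_single, ← Finsupp.single_sub]
    congr 1
    rw [smul_eq_mul]
    push_cast
    ring
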